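/- Let V be a finite set of size k ≥ 2 and let r_1, ..., r_n be independent uniformly random elements of V. Then the probability that the set {r_1, ..., r_n} is not all of V is at least k(1-1/k)^n (1 - k(1-1/(k-1))^n). -/

import Mathlib

open scoped Classical
open Finset

lemma card_avoid (V : Type) [Fintype V] (n : ℕ) (s : Finset V) :
    (Finset.univ.filter (fun r : Fin n → V => ∀ i, r i ∈ s)).card = s.card ^ n := by
  have h : Finset.univ.filter (fun r : Fin n → V => ∀ i, r i ∈ s)
      = Fintype.piFinset (fun _ : Fin n => s) := by
    ext r; simp [Fintype.mem_piFinset]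
  rw [h, Fintype.card_piFinset]
  simp

/-- Coupon collector lower bound: i.i.d. uniform samples `r : Fin n → V` from a
`k`-element set `V` fail to cover `V` with probability at least
`k(1-1/k)^n (1 - k(1-1/(k-1))^n)`. Probabilities are formalized by counting
over the uniform space of all `k^n` sample sequences. -/
theorem stmt0 (V : Type) [Fintype V] (k n : ℕ) (hk : 2 ≤ k)
    (hcard : Fintype.card V = k) :
    ((Finset.univ.filter
        (fun r : Fin n → V => Finset.image r Finset.univ ≠ Finset.univ)).card : ℝ)
      / (k : ℝ) ^ n
    ≥ (k : ℝ) * (1 - 1 / k) ^ n * (1 - (k : ℝ) * (1 - 1 / ((k : ℝ) - 1)) ^ n) := by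
  -- notation
  set m : (Fin n → V) → ℕ := fun r => (univ.filter fun v => ∀ i, r i ≠ v).card with hm
  -- S1
  have S1 : ∑ r : Fin n → V, m r = k * (k-1)^n := by
    have h1 : ∀ r : Fin n → V, m r = ∑ v : V, if (∀ i, r i ≠ v) then 1 else 0 :=
      fun r => Finset.card_filter _ _
    simp_rw [h1]
    rw [Finset.sum_comm]
    have h2 : ∀ v : V, (∑ r : Fin n → V, if (∀ i, r i ≠ v) then 1 else 0) = (k-1)^n := by
      intro v
      rw [← Finset.card_filter]
      have h3 : (univ.filter fun r : Fin n → V => ∀ i, r i ≠ v)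
          = univ.filter (fun r => ∀ i, r i ∈ ({v}ᶜ : Finset V)) := by
        simp
      rw [h3, card_avoid]
      congr 1
      rw [Finset.card_compl, hcard]; simp
    simp_rw [h2]
    simp [hcard, mul_comm]
  -- S2
  have S2 : ∑ r : Fin n → V, m r * m r = k * (k-1)^n + (k*(k-1)) * (k-2)^n := by
    have h1 : ∀ r : Fin n → V, m r * m r
        = ∑ p : V × V, if (∀ i, r i ≠ p.1) ∧ (∀ i, r i ≠ p.2) then 1 else 0 := by
      intro r
      show (univ.filter fun v : V => ∀ i, r i ≠ v).card *
          (univ.filter fun v : V => ∀ i, r i ≠ v).card = _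
      rw [Finset.card_filter, Fintype.sum_prod_type, Finset.sum_mul_sum]
      congr 1; ext v; congr 1; ext w
      by_cases hv : (∀ i, r i ≠ v) <;> by_cases hw : (∀ i, r i ≠ w) <;> simp [hv, hw]
    simp_rw [h1]
    rw [Finset.sum_comm]
    have h2 : ∀ p : V × V,
        (∑ r : Fin n → V, if (∀ i, r i ≠ p.1) ∧ (∀ i, r i ≠ p.2) then 1 else 0)
        = if p.1 = p.2 then (k-1)^n else (k-2)^n := by
      rintro ⟨v, w⟩
      rw [← Finset.card_filter]
      have h3 : (univ.filter fun r : Fin n → V => (∀ i, r i ≠ v) ∧ (∀ i, r i ≠ w))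
          = univ.filter (fun r => ∀ i, r i ∈ ({v, w} : Finset V)ᶜ) := by
        ext r; simp [forall_and]
      rw [h3, card_avoid]
      by_cases hvw : v = w
      · simp [hvw, Finset.card_compl, hcard]
      · have : ({v, w} : Finset V)ᶜ.card = k - 2 := by
          rw [Finset.card_compl, hcard, Finset.card_insert_of_notMem (by simp [hvw])]
          simp
        rw [this, if_neg hvw]
    simp_rw [h2]
    rw [Fintype.sum_prod_type]
    have h4 : ∀ v : V, (∑ w : V, if v = w then (k-1)^n else (k-2)^n)
        = (k-1)^n + (k-1)*(k-2)^n := by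
      intro v
      rw [Finset.sum_ite, Finset.sum_const, Finset.sum_const]
      have e1 : (univ.filter fun w : V => v = w) = {v} := by ext w; simp [eq_comm]
      have e2 : (univ.filter fun w : V => ¬ v = w) = {v}ᶜ := by ext w; simp [eq_comm]
      rw [e1, e2, Finset.card_singleton, Finset.card_compl, hcard]
      simp [smul_eq_mul]
    simp_rw [h4]
    simp [hcard]
    ring
  -- pointwise Bonferroni bound
  have key : ∀ r : Fin n → V, 3 * (m r : ℝ) - (m r : ℝ)^2
      ≤ 2 * (if Finset.image r Finset.univ ≠ Finset.univ then (1:ℝ) else 0) := by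
    intro r
    by_cases h : Finset.image r Finset.univ = Finset.univ
    · have hm0 : m r = 0 := by
        rw [hm]
        simp only [Finset.card_eq_zero, Finset.filter_eq_empty_iff]
        intro v _
        push_neg
        have : v ∈ Finset.image r Finset.univ := h ▸ Finset.mem_univ v
        obtain ⟨i, _, hi⟩ := Finset.mem_image.mp this
        exact ⟨i, hi⟩
      simp [h, hm0]
    · have hm1 : 1 ≤ m r := by
        rw [Finset.eq_univ_iff_forall] at h
        push_neg at h
        obtain ⟨v, hv⟩ := h
        have hv' : ∀ i, r i ≠ v := by
          intro i hi
          exact hv (Finset.mem_image.mpr ⟨i, Finset.mem_univ i, hi⟩)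
        rw [hm]
        exact Finset.card_pos.mpr ⟨v, by simp [hv']⟩
      simp only [h, if_pos, ne_eq, not_false_eq_true, mul_one]
      rcases Nat.lt_or_ge (m r) 2 with h2 | h2
      · have : m r = 1 := by omega
        rw [this]; norm_num
      · have : (2:ℝ) ≤ (m r : ℝ) := by exact_mod_cast h2
        nlinarith
  -- sum the pointwise bound
  set N := (Finset.univ.filter
      (fun r : Fin n → V => Finset.image r Finset.univ ≠ Finset.univ)).card with hN
  have hsum : 3 * ((∑ r : Fin n → V, m r : ℕ) : ℝ) - ((∑ r : Fin n → V, m r * m r : ℕ) : ℝ)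
      ≤ 2 * (N : ℝ) := by
    push_cast
    have := Finset.sum_le_sum (fun r (_ : r ∈ (univ : Finset (Fin n → V))) => key r)
    rw [Finset.sum_sub_distrib, ← Finset.mul_sum, ← Finset.mul_sum] at this
    have e3 : ∑ x : Fin n → V, (m x : ℝ) * m x = ∑ x : Fin n → V, (m x : ℝ) ^ 2 := by simp [sq]
    have e4 : (N : ℝ) = ∑ i : Fin n → V, if image i univ ≠ univ then (1:ℝ) else 0 := by
      rw [Finset.sum_boole, hN]
    rw [e3, e4]; exact this
  rw [S1, S2] at hsum
  -- arithmetic conclusion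
  have hk1 : (1:ℕ) ≤ k := by omega
  have hk2 : (2:ℕ) ≤ k := hk
  have hK : (2:ℝ) ≤ (k:ℝ) := by exact_mod_cast hk
  set K := (k:ℝ) with hKdef
  have c1 : ((k - 1 : ℕ) : ℝ) = K - 1 := by push_cast [Nat.cast_sub hk1]; ring
  have c2 : ((k - 2 : ℕ) : ℝ) = K - 2 := by push_cast [Nat.cast_sub hk2]; ring
  push_cast [c1, c2] at hsum
  have hKpos : (0:ℝ) < K := by linarith
  have hK1pos : (0:ℝ) < K - 1 := by linarith
  have hK2 : (0:ℝ) ≤ K - 2 := by linarith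
  have hNge : (N : ℝ) ≥ K * (K-1)^n - K^2 * (K-2)^n := by
    have hp : (0:ℝ) ≤ (K-2)^n := pow_nonneg hK2 n
    nlinarith [hsum]
  have e1 : 1 - 1/K = (K-1)/K := by field_simp
  have e2 : 1 - 1/(K-1) = (K-2)/(K-1) := by field_simp; ring
  rw [e1, e2, div_pow, div_pow, ge_iff_le, le_div_iff₀ (by positivity : (0:ℝ) < K^n)]
  have expand : K * ((K-1)^n/K^n) * (1 - K*((K-2)^n/(K-1)^n)) * K^n
      = K*(K-1)^n - K^2 * (K-2)^n := by
    field_simp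
  rw [expand]
  exact hNge
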